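/- arXiv:1102.3240 — 3 statements merged into one kernel-verified Lean document; each statement's English description precedes it below -/
import Mathlib

section
/- Let R be a discrete valuation domain with prime element p, let λ be a limit ordinal, and let N be a submodule of a torsion R-module G. Then N is λ-balanced in G (i.e., p^σG ∩ N = p^σN and p^σ(G/N) = (p^σG + N)/N for every σ < λ) if and only if (p^σG[p] + N)/N = (p^σ(G/N))[p] for every σ < λ. -/
universe u v w

open Ordinal

/-- The submodule `p^σ G`, defined by transfinite recursion. -/
noncomputable def pPow (R : Type u) [CommRing R] (p : R) (G : Type v) [AddCommGroup G]
    [Module R G] (σ : Ordinal.{w}) : Submodule R G :=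
  Ordinal.limitRecOn σ ⊤ (fun _ N => N.map (LinearMap.lsmul R G p))
    (fun o _ ih => ⨅ ρ : Set.Iio o, ih ρ.1 ρ.2)

section basics

variable (R : Type u) [CommRing R] (p : R) (G : Type v) [AddCommGroup G] [Module R G]

@[simp] lemma pPow_zero : pPow R p G 0 = ⊤ :=
  Ordinal.limitRecOn_zero _ _ _

@[simp] lemma pPow_succ (σ : Ordinal.{w}) :
    pPow R p G (Order.succ σ) = (pPow R p G σ).map (LinearMap.lsmul R G p) :=
  Ordinal.limitRecOn_succ _ _ _ _

lemma pPow_limit {o : Ordinal.{w}} (ho : Order.IsSuccLimit o) :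
    pPow R p G o = ⨅ ρ : Set.Iio o, pPow R p G ρ.1 :=
  Ordinal.limitRecOn_limit _ _ _ _ ho

variable {R G}
variable {H : Type*} [AddCommGroup H] [Module R H]

lemma pPow_map_le (f : G →ₗ[R] H) (σ : Ordinal.{w}) :
    (pPow R p G σ).map f ≤ pPow R p H σ := by
  induction σ using Ordinal.limitRecOn with
  | zero => simp
  | add_one σ ih =>
    rw [Ordinal.add_one_eq_succ]
    have hc : (LinearMap.lsmul R H p).comp f = f.comp (LinearMap.lsmul R G p) := by
      ext x; simp
    rw [pPow_succ, pPow_succ, ← Submodule.map_comp, ← hc, Submodule.map_comp]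
    exact Submodule.map_mono ih
  | limit o ho ih =>
    rw [pPow_limit _ _ _ ho, pPow_limit _ _ _ ho]
    refine le_iInf fun ρ => ?_
    exact le_trans (Submodule.map_mono (iInf_le _ ρ)) (ih ρ.1 ρ.2)

end basics

theorem stmt2 (R : Type u) [CommRing R] [IsDomain R] [IsDiscreteValuationRing R]
    (p : R) (hp : Irreducible p)
    (lam : Ordinal.{w}) (hlam : Order.IsSuccLimit lam)
    (G : Type v) [AddCommGroup G] [Module R G] (hG : Module.IsTorsion R G)
    (N : Submodule R G) :
    ((∀ σ < lam, pPow R p G σ ⊓ N = (pPow R p (↥N) σ).map N.subtype) ∧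
      (∀ σ < lam, pPow R p (G ⧸ N) σ = (pPow R p G σ ⊔ N).map N.mkQ)) ↔
      ∀ σ < lam,
        ((pPow R p G σ ⊓ Submodule.torsionBy R G p) ⊔ N).map N.mkQ =
          pPow R p (G ⧸ N) σ ⊓ Submodule.torsionBy R (G ⧸ N) p := by
  have hsup : ∀ A : Submodule R G, (A ⊔ N).map N.mkQ = A.map N.mkQ := fun A => by
    rw [Submodule.map_sup, Submodule.mkQ_map_self, sup_bot_eq]
  -- every element of G ⧸ N is killed by a power of p
  have hGN : ∀ z : G ⧸ N, ∃ k : ℕ, p ^ k • z = 0 := by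
    intro z
    obtain ⟨g, rfl⟩ := N.mkQ_surjective z
    obtain ⟨⟨r, hr⟩, hrg⟩ := @hG g
    have hr0 : r ≠ 0 := nonZeroDivisors.ne_zero hr
    obtain ⟨n, u, hnu⟩ := IsDiscreteValuationRing.associated_pow_irreducible hr0 hp
    refine ⟨n, ?_⟩
    rw [← hnu, mul_comm, mul_smul, ← map_smul]
    simp only [Submonoid.smul_def] at hrg
    rw [hrg, map_zero, smul_zero]
  constructor
  · rintro ⟨hiso, hnice⟩ σ hσ
    apply le_antisymm
    · rw [hsup]
      rintro z hz
      obtain ⟨a, ha, rfl⟩ := hz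
      refine Submodule.mem_inf.2 ⟨pPow_map_le p N.mkQ σ ⟨a, ha.1, rfl⟩, ?_⟩
      have ha2 : p • a = 0 := ha.2
      show p • N.mkQ a = 0
      rw [← map_smul, ha2, map_zero]
    · rintro z hz
      rw [Submodule.mem_inf] at hz
      obtain ⟨hz1, hz2⟩ := hz
      rw [hnice σ hσ, hsup] at hz1
      obtain ⟨x, hx, rfl⟩ := hz1
      have hz2' : p • N.mkQ x = 0 := hz2
      rw [← map_smul] at hz2'
      have hxN : p • x ∈ N := by
        rwa [N.mkQ_apply, Submodule.Quotient.mk_eq_zero] at hz2'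
      have hxP : p • x ∈ pPow R p G (Order.succ σ) ⊓ N := by
        refine ⟨?_, hxN⟩
        rw [pPow_succ]; exact ⟨x, hx, rfl⟩
      rw [hiso _ (hlam.succ_lt hσ)] at hxP
      obtain ⟨m, hm, hme⟩ := hxP
      rw [pPow_succ] at hm
      obtain ⟨n, hn, rfl⟩ := hm
      -- hme : ↑(p • n) = p • x
      refine ⟨x - ↑n, Submodule.mem_sup_left (Submodule.mem_inf.2 ⟨?_, ?_⟩), ?_⟩
      · exact sub_mem hx (pPow_map_le p N.subtype σ ⟨n, hn, rfl⟩)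
      · show p • (x - (↑n : G)) = 0
        rw [smul_sub]
        simp only [LinearMap.lsmul_apply] at hme
        rw [← hme]
        simp
      · rw [map_sub]
        have : N.mkQ ↑n = 0 := by
          rw [N.mkQ_apply, Submodule.Quotient.mk_eq_zero]; exact n.2
        rw [this, _root_.sub_zero]
  · intro hstar
    have hstar' : ∀ σ < lam, (pPow R p G σ ⊓ Submodule.torsionBy R G p).map N.mkQ =
        pPow R p (G ⧸ N) σ ⊓ Submodule.torsionBy R (G ⧸ N) p := fun σ h => by
      rw [← hsup, hstar σ h]
    -- key lemma: lifting p^k-bounded elements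
    have Q : ∀ k : ℕ, ∀ σ < lam, ∀ z ∈ pPow R p (G ⧸ N) σ, p ^ k • z = 0 →
        ∃ x ∈ pPow R p G σ, N.mkQ x = z := by
      intro k
      induction k with
      | zero =>
        intro σ hσ z hz h0
        simp only [pow_zero, one_smul] at h0
        exact ⟨0, zero_mem _, by rw [map_zero, h0]⟩
      | succ k ih =>
        intro σ hσ z hz h0
        have hpz : p • z ∈ pPow R p (G ⧸ N) (Order.succ σ) := by
          rw [pPow_succ]; exact ⟨z, hz, rfl⟩
        have h0' : p ^ k • (p • z) = 0 := by
          rw [← mul_smul, ← pow_succ, h0]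
        obtain ⟨y, hy, hyz⟩ := ih (Order.succ σ) (hlam.succ_lt hσ) _ hpz h0'
        rw [pPow_succ] at hy
        obtain ⟨x, hx, rfl⟩ := hy
        simp only [LinearMap.lsmul_apply] at hyz
        have hmx : N.mkQ x ∈ pPow R p (G ⧸ N) σ := pPow_map_le p N.mkQ σ ⟨x, hx, rfl⟩
        have h1 : p • (z - N.mkQ x) = 0 := by
          rw [smul_sub, ← map_smul, hyz, _root_.sub_self]
        have hmem : z - N.mkQ x ∈ pPow R p (G ⧸ N) σ ⊓ Submodule.torsionBy R (G ⧸ N) p :=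
          Submodule.mem_inf.2 ⟨sub_mem hz hmx, h1⟩
        rw [← hstar' σ hσ] at hmem
        obtain ⟨u, hu, hue⟩ := hmem
        refine ⟨x + u, add_mem hx hu.1, ?_⟩
        rw [map_add, hue, _root_.add_sub_cancel]
    have hnice : ∀ σ < lam, pPow R p (G ⧸ N) σ = (pPow R p G σ ⊔ N).map N.mkQ := by
      intro σ hσ
      rw [hsup]
      apply le_antisymm
      · intro z hz
        obtain ⟨k, hk⟩ := hGN z
        obtain ⟨x, hx, rfl⟩ := Q k σ hσ z hz hk
        exact ⟨x, hx, rfl⟩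
      · exact pPow_map_le p N.mkQ σ
    refine ⟨?_, hnice⟩
    intro σ
    induction σ using Ordinal.limitRecOn with
    | zero =>
      intro _
      rw [pPow_zero, pPow_zero, top_inf_eq, Submodule.map_top, Submodule.range_subtype]
    | add_one σ ih =>
      rw [Ordinal.add_one_eq_succ]
      intro hσ'
      have hσ : σ < lam := lt_of_lt_of_le (Order.lt_succ σ) hσ'.le
      have ihh := ih hσ
      apply le_antisymm
      · rintro z hz
        rw [Submodule.mem_inf] at hz
        obtain ⟨hz1, hz2⟩ := hz
        rw [pPow_succ] at hz1
        obtain ⟨x, hx, rfl⟩ := hz1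
        simp only [LinearMap.lsmul_apply] at hz2 ⊢
        have hmx : N.mkQ x ∈ pPow R p (G ⧸ N) σ ⊓ Submodule.torsionBy R (G ⧸ N) p := by
          refine Submodule.mem_inf.2 ⟨pPow_map_le p N.mkQ σ ⟨x, hx, rfl⟩, ?_⟩
          show p • N.mkQ x = 0
          rw [← map_smul, N.mkQ_apply, Submodule.Quotient.mk_eq_zero]
          exact hz2
        rw [← hstar' σ hσ] at hmx
        obtain ⟨u, hu, hue⟩ := hmx
        have hxu : x - u ∈ pPow R p G σ ⊓ N := by
          refine Submodule.mem_inf.2 ⟨sub_mem hx hu.1, ?_⟩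
          rw [← Submodule.Quotient.mk_eq_zero, ← N.mkQ_apply, map_sub, hue, _root_.sub_self]
        rw [ihh] at hxu
        obtain ⟨m, hm, hme⟩ := hxu
        refine ⟨p • m, ?_, ?_⟩
        · rw [pPow_succ]; exact ⟨m, hm, rfl⟩
        · have hpu : p • u = 0 := hu.2
          rw [map_smul, hme, smul_sub, hpu, _root_.sub_zero]
      · exact le_inf (pPow_map_le p N.subtype _) (Submodule.map_subtype_le _ _)
    | limit o ho ih =>
      intro hσ
      apply le_antisymm
      · rintro z hz
        rw [Submodule.mem_inf] at hz
        obtain ⟨hz1, hz2⟩ := hz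
        refine ⟨⟨z, hz2⟩, ?_, rfl⟩
        simp only [SetLike.mem_coe]
        rw [pPow_limit _ _ _ ho, Submodule.mem_iInf]
        rintro ⟨ρ, hρ⟩
        have hzρ : z ∈ pPow R p G ρ ⊓ N := by
          refine Submodule.mem_inf.2 ⟨?_, hz2⟩
          rw [pPow_limit _ _ _ ho, Submodule.mem_iInf] at hz1
          exact hz1 ⟨ρ, hρ⟩
        rw [ih ρ hρ (hρ.trans hσ)] at hzρ
        obtain ⟨m, hm, hme⟩ := hzρ
        have : m = ⟨z, hz2⟩ := Subtype.ext hme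
        rwa [← this]
      · exact le_inf (pPow_map_le p N.subtype _) (Submodule.map_subtype_le _ _)
end

section
/- Let R be a discrete valuation domain with prime element p, β an ordinal, and P_β the Walker module. Then the quotient of P_β by the cyclic submodule ⟨β⟩ generated by the generator β is isomorphic to the direct sum ⊕_{γ<β} P_γ of the Walker modules P_γ over all ordinals γ < β. -/
universe u v w

open Ordinal

/-- Generators of the Walker module `P β`: strictly decreasing finite sequences of ordinals
starting with `β` (encoded by their tails). -/
def WalkerGen (β : Ordinal.{w}) : Type (w + 1) :=
  {l : List Ordinal.{w} // (β :: l).Chain' (· > ·)}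

/-- The defining relation of the Walker module attached to a generator `g`:
`p • g - g'` where `g'` is obtained by deleting the last entry of `g`
(interpreted as `0` when `g` is the length-one sequence `β`). -/
noncomputable def walkerRel (R : Type u) [CommRing R] (p : R) (β : Ordinal.{w})
    (g : WalkerGen β) : WalkerGen β →₀ R :=
  p • Finsupp.single g 1 -
    if _h : g.1 = [] then 0
    else Finsupp.single
      ⟨g.1.dropLast, g.2.sublist ((g.1.dropLast_sublist).cons₂ β)⟩ 1

/-- The Walker module `P β` over a discrete valuation domain with prime `p`. -/
noncomputable abbrev WalkerModule (R : Type u) [CommRing R] (p : R) (β : Ordinal.{w}) :=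
  (WalkerGen β →₀ R) ⧸ Submodule.span R (Set.range (walkerRel R p β))

/-- The image in `P β` of a generator. -/
noncomputable def walkerMk (R : Type u) [CommRing R] (p : R) (β : Ordinal.{w})
    (g : WalkerGen β) : WalkerModule R p β :=
  Submodule.Quotient.mk (Finsupp.single g 1)

/-- The distinguished generator `β` of the Walker module `P β`. -/
noncomputable def walkerTop (R : Type u) [CommRing R] (p : R) (β : Ordinal.{w}) :
    WalkerModule R p β :=
  walkerMk R p β ⟨[], List.isChain_singleton β⟩

section Aux
open scoped DirectSum

variable (R : Type u) [CommRing R] (p : R) (β : Ordinal.{w})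

noncomputable instance walkerDirectSumAddCommGroup :
    AddCommGroup (⨁ γ : Set.Iio β, WalkerModule R p γ.1) :=
  @DirectSum.instAddCommGroup (Set.Iio β) (fun γ => WalkerModule R p γ.1) (fun _ => inferInstance)

lemma walkerRel_mk_zero (g : WalkerGen β) :
    (Submodule.Quotient.mk (walkerRel R p β g) : WalkerModule R p β) = 0 :=
  (Submodule.Quotient.mk_eq_zero _).2 (Submodule.subset_span ⟨g, rfl⟩)

lemma smul_walkerMk (g : WalkerGen β) :
    p • walkerMk R p β g =
      if h : g.1 = [] then 0
      else walkerMk R p β ⟨g.1.dropLast, g.2.sublist ((g.1.dropLast_sublist).cons₂ β)⟩ := by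
  have h0 := walkerRel_mk_zero R p β g
  rw [walkerRel] at h0
  rw [Submodule.Quotient.mk_sub, Submodule.Quotient.mk_smul, sub_eq_zero] at h0
  unfold walkerMk
  rw [h0]
  split_ifs with h
  · simp [h]
  · rfl

/-- The target of the generator-level map from `P β` to the direct sum. -/
noncomputable def toTarget : WalkerGen β → ⨁ γ : Set.Iio β, WalkerModule R p γ.1 :=
  fun g =>
    match g with
    | ⟨[], _⟩ => 0
    | ⟨γ :: t, h⟩ =>
      DirectSum.lof R (Set.Iio β) (fun γ : Set.Iio β => WalkerModule R p γ.1)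
        ⟨γ, (List.isChain_cons_cons.mp h).1⟩ (walkerMk R p γ ⟨t, (List.isChain_cons_cons.mp h).2⟩)

noncomputable def walkerPhi0 :
    (WalkerGen β →₀ R) →ₗ[R] ⨁ γ : Set.Iio β, WalkerModule R p γ.1 :=
  Finsupp.linearCombination R (toTarget R p β)

lemma walkerPhi0_single (g : WalkerGen β) :
    walkerPhi0 R p β (Finsupp.single g 1) = toTarget R p β g := by
  simp [walkerPhi0]

lemma walkerPhi0_rel (g : WalkerGen β) : walkerPhi0 R p β (walkerRel R p β g) = 0 := by
  rw [walkerRel]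
  obtain ⟨l, h⟩ := g
  rw [map_sub, map_smul]
  match l, h with
  | [], h =>
      erw [walkerPhi0_single]
      simp [toTarget]
      exact smul_zero (A := ⨁ γ : Set.Iio β, WalkerModule R p γ.1) p
  | [γ], h =>
      erw [walkerPhi0_single, walkerPhi0_single]
      show p • toTarget R p β ⟨[γ], h⟩ - 0 = 0
      rw [_root_.sub_zero, toTarget, ← map_smul]
      erw [smul_walkerMk]
      simp
  | γ :: a :: t, h =>
      erw [walkerPhi0_single, walkerPhi0_single]
      show p • toTarget R p β ⟨γ :: a :: t, h⟩ -
        toTarget R p β ⟨γ :: (a :: t).dropLast, _⟩ = 0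
      show p • DirectSum.lof R (Set.Iio β) (fun γ : Set.Iio β => WalkerModule R p γ.1) ⟨γ, _⟩
          (walkerMk R p γ ⟨a :: t, _⟩) -
        DirectSum.lof R (Set.Iio β) (fun γ : Set.Iio β => WalkerModule R p γ.1) ⟨γ, _⟩
          (walkerMk R p γ ⟨(a :: t).dropLast, _⟩) = 0
      rw [← map_smul]
      erw [smul_walkerMk]
      simp only [List.cons_ne_nil, dite_false]
      rw [← map_sub, _root_.sub_self, map_zero]

noncomputable def walkerPhi1 :
    WalkerModule R p β →ₗ[R] ⨁ γ : Set.Iio β, WalkerModule R p γ.1 :=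
  Submodule.liftQ (Submodule.span R (Set.range (walkerRel R p β))) (walkerPhi0 R p β) (by
    rw [Submodule.span_le]
    rintro x ⟨g, rfl⟩
    exact walkerPhi0_rel R p β g)

noncomputable def walkerPhi :
    (WalkerModule R p β ⧸ Submodule.span R {walkerTop R p β}) →ₗ[R]
      ⨁ γ : Set.Iio β, WalkerModule R p γ.1 :=
  Submodule.liftQ (Submodule.span R {walkerTop R p β}) (walkerPhi1 R p β) (by
    rw [Submodule.span_le, Set.singleton_subset_iff]
    show walkerPhi1 R p β (walkerTop R p β) = 0
    show walkerPhi0 R p β (Finsupp.single _ 1) = 0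
    exact (walkerPhi0_single R p β _).trans rfl)

/-- The generator-level reverse map. -/
noncomputable def fromGen (γ : Set.Iio β) : WalkerGen γ.1 →
    (WalkerModule R p β ⧸ Submodule.span R {walkerTop R p β}) :=
  fun m => Submodule.Quotient.mk
    (walkerMk R p β ⟨γ.1 :: m.1, List.isChain_cons_cons.mpr ⟨γ.2, m.2⟩⟩)

noncomputable def walkerPsi0 (γ : Set.Iio β) :
    (WalkerGen γ.1 →₀ R) →ₗ[R]
      (WalkerModule R p β ⧸ Submodule.span R {walkerTop R p β}) :=
  Finsupp.linearCombination R (fromGen R p β γ)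

lemma walkerPsi0_rel (γ : Set.Iio β) (m : WalkerGen γ.1) :
    walkerPsi0 R p β γ (walkerRel R p γ.1 m) = 0 := by
  rw [walkerRel]
  rw [map_sub, map_smul]
  have hs : ∀ m' : WalkerGen γ.1, walkerPsi0 R p β γ (Finsupp.single m' 1) =
      fromGen R p β γ m' := by
    intro m'; simp [walkerPsi0]
  rw [hs]
  obtain ⟨l, h⟩ := m
  match l, h with
  | [], h =>
      simp only [dite_true, map_zero, sub_zero]
      unfold fromGen
      erw [← Submodule.Quotient.mk_smul, smul_walkerMk]
      simp only [List.cons_ne_nil, dite_false, _root_.sub_zero]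
      exact (Submodule.Quotient.mk_eq_zero _).2 (Submodule.mem_span_singleton_self _)
  | a :: t, h =>
      simp only [List.cons_ne_nil, dite_false, hs]
      unfold fromGen
      erw [← Submodule.Quotient.mk_smul, smul_walkerMk]
      simp only [List.cons_ne_nil, dite_false]
      rw [sub_eq_zero]
      exact (hs ⟨(a :: t).dropLast, _⟩).symm

noncomputable def walkerPsi1 (γ : Set.Iio β) :
    WalkerModule R p γ.1 →ₗ[R]
      (WalkerModule R p β ⧸ Submodule.span R {walkerTop R p β}) :=
  Submodule.liftQ _ (walkerPsi0 R p β γ) (by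
    rw [Submodule.span_le]
    rintro x ⟨m, rfl⟩
    exact walkerPsi0_rel R p β γ m)

noncomputable def walkerPsi :
    (⨁ γ : Set.Iio β, WalkerModule R p γ.1) →ₗ[R]
      (WalkerModule R p β ⧸ Submodule.span R {walkerTop R p β}) :=
  DirectSum.toModule R (Set.Iio β) _ (walkerPsi1 R p β)

lemma phi_comp_psi : (walkerPhi R p β).comp (walkerPsi R p β) = LinearMap.id := by
  apply DirectSum.linearMap_ext
  intro γ
  apply Submodule.linearMap_qext
  apply Finsupp.lhom_ext'
  intro m
  apply LinearMap.ext_ring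
  simp only [LinearMap.comp_apply, Finsupp.lsingle_apply, Submodule.mkQ_apply,
    _root_.smul_eq_mul, mul_one]
  rw [walkerPsi, DirectSum.toModule_lof]
  show walkerPhi R p β (walkerPsi0 R p β γ (Finsupp.single m 1)) =
    DirectSum.lof R (Set.Iio β) (fun γ : Set.Iio β => WalkerModule R p γ.1) γ
      (walkerMk R p γ.1 m)
  have : walkerPsi0 R p β γ (Finsupp.single m 1) = fromGen R p β γ m := by
    simp [walkerPsi0]
  rw [this]
  show walkerPhi0 R p β (Finsupp.single _ 1) = _
  exact (walkerPhi0_single R p β _).trans rfl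

lemma psi_comp_phi : (walkerPsi R p β).comp (walkerPhi R p β) = LinearMap.id := by
  apply Submodule.linearMap_qext
  apply Submodule.linearMap_qext
  apply Finsupp.lhom_ext'
  intro g
  apply LinearMap.ext_ring
  simp only [LinearMap.comp_apply, Finsupp.lsingle_apply, Submodule.mkQ_apply,
    _root_.smul_eq_mul, mul_one, LinearMap.id_apply]
  show walkerPsi R p β (walkerPhi0 R p β (Finsupp.single g 1)) =
    Submodule.Quotient.mk (walkerMk R p β g)
  rw [walkerPhi0_single]
  obtain ⟨l, h⟩ := g
  match l, h with
  | [], h =>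
      show walkerPsi R p β 0 = Submodule.Quotient.mk (walkerTop R p β)
      rw [map_zero]
      exact ((Submodule.Quotient.mk_eq_zero _).2
        (Submodule.mem_span_singleton_self _)).symm
  | γ :: t, h =>
      show walkerPsi R p β (DirectSum.lof R (Set.Iio β)
          (fun γ : Set.Iio β => WalkerModule R p γ.1) ⟨γ, _⟩
          (walkerMk R p γ ⟨t, _⟩)) = _
      rw [walkerPsi, DirectSum.toModule_lof]
      show walkerPsi0 R p β _ (Finsupp.single _ 1) = _
      simp only [walkerPsi0, Finsupp.linearCombination_single, one_smul]
      erw [Finsupp.linearCombination_single, one_smul]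
      rfl

end Aux

open DirectSum in
theorem stmt4 (R : Type u) [CommRing R] [IsDomain R] [IsDiscreteValuationRing R]
    (p : R) (hp : Irreducible p) (β : Ordinal.{w}) :
    Nonempty
      ((WalkerModule R p β ⧸ Submodule.span R {walkerTop R p β}) ≃ₗ[R]
        ⨁ γ : Set.Iio β, WalkerModule R p γ.1) := by
  exact ⟨LinearEquiv.ofLinear (walkerPhi R p β) (walkerPsi R p β)
    (phi_comp_psi R p β) (psi_comp_phi R p β)⟩
end

section
/- Let λ be an infinite regular cardinal, let A be a λ-accessible category, and let B be a λ-accessible subcategory of A given by a set S' of objects of B that are λ-presentable in A. Then for an object Y of A the following are equivalent: (1) Y belongs to B; (2) for every λ-presentable object X of A, every morphism X → Y factors through an object of S'. Consequently, B is closed under λ-directed colimits in A and is itself a λ-accessible category. -/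
universe w v u

open CategoryTheory CategoryTheory.Limits

/-- A preordered set is `κ`-directed if every subset of cardinality `< κ` has an upper bound. -/
def IsCardDirected (κ : Cardinal.{w}) (J : Type w) [Preorder J] : Prop :=
  ∀ s : Set J, Cardinal.mk s < κ → ∃ u : J, ∀ j ∈ s, j ≤ u

/-- An object `X` is `κ`-presentable if `Hom(X, -)` preserves colimits of `κ`-directed
systems. -/
def IsPresentableObj {A : Type u} [Category.{v} A] (κ : Cardinal.{v}) (X : A) : Prop :=
  ∀ (J : Type v) [Preorder J], IsCardDirected κ J →
    PreservesColimitsOfShape J (coyoneda.obj (Opposite.op X))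

/-- `Y` is a colimit of a `κ`-directed system of objects belonging to `S`. -/
def IsDirColimitOf {A : Type u} [Category.{v} A] (κ : Cardinal.{v}) (S : Set A) (Y : A) :
    Prop :=
  ∃ (J : Type v) (_ : Preorder J) (_ : IsCardDirected κ J) (D : J ⥤ A) (c : Cocone D),
    (∀ j : J, D.obj j ∈ S) ∧ Nonempty (IsColimit c) ∧ Nonempty (c.pt ≅ Y)

/-- A category is `κ`-accessible: it has `κ`-directed colimits and there is a set of
`κ`-presentable objects such that every object is a `κ`-directed colimit of objects
from this set. -/
def IsAccessibleCat (κ : Cardinal.{v}) (A : Type u) [Category.{v} A] : Prop :=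
  (∀ (J : Type v) [Preorder J], IsCardDirected κ J → HasColimitsOfShape J A) ∧
  ∃ (ι : Type v) (F : ι → A),
    (∀ i, IsPresentableObj κ (F i)) ∧ ∀ Y : A, IsDirColimitOf κ (Set.range F) Y

section Basics

variable {κ : Cardinal.{w}}

theorem IsCardDirected.directed (hκ : κ.IsRegular) {J : Type w} [Preorder J]
    (hJ : IsCardDirected κ J) : IsDirected J (· ≤ ·) := by
  constructor
  intro a b
  obtain ⟨u, hu⟩ := hJ {a, b}
    (((Set.finite_singleton b).insert a).lt_aleph0.trans_le hκ.aleph0_le)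
  exact ⟨u, hu a (by simp), hu b (by simp)⟩

theorem IsCardDirected.nonempty (hκ : κ.IsRegular) {J : Type w} [Preorder J]
    (hJ : IsCardDirected κ J) : Nonempty J := by
  obtain ⟨u, -⟩ := hJ ∅ (by simpa using hκ.pos)
  exact ⟨u⟩

end Basics

section Present

variable {A : Type u} [Category.{v} A] {κ : Cardinal.{v}}

/-- Morphisms from a presentable object into a directed colimit factor through the system. -/
theorem presentable_fac (hκ : κ.IsRegular) {X : A} (hX : IsPresentableObj κ X)
    {J : Type v} [Preorder J] (hJ : IsCardDirected κ J) {D : J ⥤ A} {c : Cocone D}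
    (hc : IsColimit c) (f : X ⟶ c.pt) : ∃ (j : J) (g : X ⟶ D.obj j), g ≫ c.ι.app j = f := by
  haveI : PreservesColimitsOfShape J (coyoneda.obj (Opposite.op X)) := hX J hJ
  have hc' := isColimitOfPreserves (coyoneda.obj (Opposite.op X)) hc
  obtain ⟨j, g, hg⟩ := Types.jointly_surjective _ hc' f
  exact ⟨j, g, hg⟩

/-- Two morphisms from a presentable object into a stage of a directed colimit that agree in
the colimit agree at a later stage. -/
theorem presentable_eq (hκ : κ.IsRegular) {X : A} (hX : IsPresentableObj κ X)
    {J : Type v} [Preorder J] (hJ : IsCardDirected κ J) {D : J ⥤ A} {c : Cocone D}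
    (hc : IsColimit c) {j : J} (u v : X ⟶ D.obj j)
    (huv : u ≫ c.ι.app j = v ≫ c.ι.app j) :
    ∃ (j' : J) (h : j ≤ j'), u ≫ D.map (homOfLE h) = v ≫ D.map (homOfLE h) := by
  haveI : IsDirected J (· ≤ ·) := hJ.directed hκ
  haveI : Nonempty J := hJ.nonempty hκ
  haveI : PreservesColimitsOfShape J (coyoneda.obj (Opposite.op X)) := hX J hJ
  have hc' := isColimitOfPreserves (coyoneda.obj (Opposite.op X)) hc
  have := (Types.FilteredColimit.isColimit_eq_iff (D ⋙ coyoneda.obj (Opposite.op X)) hc'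
    (xi := u) (xj := v)).mp huv
  obtain ⟨k, f, g, hfg⟩ := this
  have hf : f = g := Subsingleton.elim _ _
  refine ⟨k, leOfHom f, ?_⟩
  have : homOfLE (leOfHom f) = f := Subsingleton.elim _ _
  rw [this]
  subst hf
  exact hfg

end Present
attribute [local instance] Classical.propDecidable
open CategoryTheory CategoryTheory.Limits

section Node

variable {A : Type u} [Category.{v} A] (κ : Cardinal.{v}) {ι : Type v} (F : ι → A) (Y : A)
  (T : Type v)

/-- A node: a small set of morphisms from the generators to `Y` (with tags to allow
making fresh copies), together with a chosen member through which everything factors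
compatibly. -/
structure AccNode : Type v where
  S : Set ((Σ i : ι, (F i ⟶ Y)) × T)
  small : Cardinal.mk S < κ
  t : (Σ i : ι, (F i ⟶ Y)) × T
  ht : t ∈ S
  e : ∀ x ∈ S, F x.1.1 ⟶ F t.1.1
  he : ∀ x (hx : x ∈ S), e x hx ≫ t.1.2 = x.1.2
  het : e t ht = 𝟙 _

namespace AccNode

variable {κ F Y T}

instance : Preorder (AccNode κ F Y T) where
  le a b := ∃ h : a.S ⊆ b.S, ∀ x (hx : x ∈ a.S), b.e x (h hx) = a.e x hx ≫ b.e a.t (h a.ht)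
  le_refl a := ⟨subset_rfl, fun x hx => by rw [a.het, Category.comp_id]⟩
  le_trans a b c hab hbc := by
    obtain ⟨s1, h1⟩ := hab
    obtain ⟨s2, h2⟩ := hbc
    refine ⟨s1.trans s2, fun x hx => ?_⟩
    rw [h2 x (s1 hx), h1 x hx, h2 a.t (s1 a.ht), Category.assoc]

theorem mem_of_le {a b : AccNode κ F Y T} (h : a ≤ b) {x} (hx : x ∈ a.S) : x ∈ b.S :=
  h.choose hx

theorem e_of_le {a b : AccNode κ F Y T} (h : a ≤ b) (x) (hx : x ∈ a.S) :
    b.e x (mem_of_le h hx) = a.e x hx ≫ b.e a.t (mem_of_le h a.ht) :=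
  h.choose_spec x hx

end AccNode

variable {κ F Y T}

/-- The canonical diagram on nodes. -/
def accDiagram : AccNode κ F Y T ⥤ A where
  obj n := F n.t.1.1
  map {a b} f := b.e a.t (AccNode.mem_of_le (leOfHom f) a.ht)
  map_id a := a.het
  map_comp {a b c} f g := AccNode.e_of_le (leOfHom g) a.t (AccNode.mem_of_le (leOfHom f) a.ht)

/-- The canonical cocone on the node diagram, with point `Y`. -/
def accCocone : Cocone (accDiagram (κ := κ) (F := F) (Y := Y) (T := T)) where
  pt := Y
  ι :=
    { app := fun n => n.t.1.2
      naturality := fun a b f => by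
        exact (b.he a.t (AccNode.mem_of_le (leOfHom f) a.ht)).trans (Category.comp_id _).symm }

attribute [reducible] accDiagram accCocone

/-- Extending a collection of factorizations through a single new node. -/
noncomputable def mkNode (hκ : Cardinal.aleph0 ≤ κ) (O : Set ((Σ i : ι, (F i ⟶ Y)) × T)) (hO : Cardinal.mk O < κ)
    (i₂ : ι) (h₂ : F i₂ ⟶ Y) (g : ∀ x ∈ O, F x.1.1 ⟶ F i₂)
    (hg : ∀ x (hx : x ∈ O), g x hx ≫ h₂ = x.1.2)
    (τ : T) (hτ : ∀ x ∈ O, x.2 ≠ τ) : AccNode κ F Y T where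
  S := insert (⟨⟨i₂, h₂⟩, τ⟩) O
  small := by
    refine lt_of_le_of_lt Cardinal.mk_insert_le (Cardinal.add_lt_of_lt hκ hO ?_)
    exact lt_of_lt_of_le Cardinal.one_lt_aleph0 hκ
  t := ⟨⟨i₂, h₂⟩, τ⟩
  ht := Set.mem_insert _ _
  e x hx :=
    if hx2 : x = (⟨⟨i₂, h₂⟩, τ⟩ : (Σ i : ι, (F i ⟶ Y)) × T) then eqToHom (by rw [hx2])
    else g x ((Set.mem_insert_iff.mp hx).resolve_left hx2)
  he x hx := by
    dsimp only
    by_cases hx2 : x = (⟨⟨i₂, h₂⟩, τ⟩ : (Σ i : ι, (F i ⟶ Y)) × T)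
    · subst hx2; rw [dif_pos rfl]; simp
    · rw [dif_neg hx2]; exact hg x _
  het := by dsimp only; rw [dif_pos rfl]; simp

attribute [reducible] mkNode

theorem mkNode_e (hκ : Cardinal.aleph0 ≤ κ) (O : Set ((Σ i : ι, (F i ⟶ Y)) × T)) (hO : Cardinal.mk O < κ)
    (i₂ : ι) (h₂ : F i₂ ⟶ Y) (g : ∀ x ∈ O, F x.1.1 ⟶ F i₂)
    (hg : ∀ x (hx : x ∈ O), g x hx ≫ h₂ = x.1.2)
    (τ : T) (hτ : ∀ x ∈ O, x.2 ≠ τ) (x) (hx : x ∈ O)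
    (hx' : x ∈ (mkNode hκ O hO i₂ h₂ g hg τ hτ).S) :
    (mkNode hκ O hO i₂ h₂ g hg τ hτ).e x hx' = g x hx := by
  have hx2 : x ≠ (⟨⟨i₂, h₂⟩, τ⟩ : (Σ i : ι, (F i ⟶ Y)) × T) := by
    intro h
    exact hτ x hx (by rw [h])
  dsimp only [mkNode]
  exact dif_neg hx2

/-- Every type of full cardinality `≥` a bound admits fresh tags. -/
theorem exists_fresh_tag (O : Set ((Σ i : ι, (F i ⟶ Y)) × T))
    (h : Cardinal.mk O < Cardinal.mk T) : ∃ τ : T, ∀ x ∈ O, x.2 ≠ τ := by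
  by_contra hc
  push_neg at hc
  have : Function.Surjective (fun x : O => x.1.2) := by
    intro τ
    obtain ⟨x, hx, hxτ⟩ := hc τ
    exact ⟨⟨x, hx⟩, hxτ⟩
  exact absurd (Cardinal.mk_le_of_surjective this) (not_le.mpr h)

theorem AccNode.le_extend (hκ : Cardinal.aleph0 ≤ κ) (z : AccNode κ F Y T) {i₂ : ι}
    {h₂ : F i₂ ⟶ Y} (k : F z.t.1.1 ⟶ F i₂)
    (hg : ∀ x (hx : x ∈ z.S), (z.e x hx ≫ k) ≫ h₂ = x.1.2)
    (τ : T) (hτ : ∀ x ∈ z.S, x.2 ≠ τ) :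
    z ≤ mkNode hκ z.S z.small i₂ h₂ (fun x hx => z.e x hx ≫ k) hg τ hτ := by
  refine ⟨fun y hy => Set.mem_insert_of_mem _ hy, fun x hx => ?_⟩
  rw [mkNode_e hκ z.S z.small i₂ h₂ _ hg τ hτ x hx,
    mkNode_e hκ z.S z.small i₂ h₂ _ hg τ hτ z.t z.ht, z.het, Category.id_comp]

theorem AccNode.extend_e_t (hκ : Cardinal.aleph0 ≤ κ) (z : AccNode κ F Y T) {i₂ : ι}
    {h₂ : F i₂ ⟶ Y} (k : F z.t.1.1 ⟶ F i₂)
    (hg : ∀ x (hx : x ∈ z.S), (z.e x hx ≫ k) ≫ h₂ = x.1.2)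
    (τ : T) (hτ : ∀ x ∈ z.S, x.2 ≠ τ)
    (hm : z.t ∈ (mkNode hκ z.S z.small i₂ h₂ (fun x hx => z.e x hx ≫ k) hg τ hτ).S) :
    (mkNode hκ z.S z.small i₂ h₂ (fun x hx => z.e x hx ≫ k) hg τ hτ).e z.t hm = k := by
  rw [mkNode_e hκ z.S z.small i₂ h₂ _ hg τ hτ z.t z.ht, z.het, Category.id_comp]

end Node
section Directed

variable {A : Type u} [Category.{v} A] {κ : Cardinal.{v}} {ι : Type v} {F : ι → A}
  {T : Type v} {J₀ : Type v} [Preorder J₀] {D₀ : J₀ ⥤ A} {cY : Cocone D₀}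

theorem accNode_directed (hκ : κ.IsRegular) (hJ₀ : IsCardDirected κ J₀)
    (hcY : IsColimit cY) (hpres : ∀ j, IsPresentableObj κ (D₀.obj j))
    (hF : ∀ i, IsPresentableObj κ (F i))
    (hfact : ∀ X : A, IsPresentableObj κ X → ∀ f : X ⟶ cY.pt,
      ∃ (i : ι) (g : X ⟶ F i) (h : F i ⟶ cY.pt), g ≫ h = f)
    (hT : Cardinal.mk T = κ) :
    IsCardDirected κ (AccNode κ F cY.pt T) := by
  intro s hs
  -- Step 1: factor each top morphism through the presentation
  have step1 : ∀ n : s, ∃ (j : J₀) (q : F n.1.t.1.1 ⟶ D₀.obj j),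
      q ≫ cY.ι.app j = n.1.t.1.2 :=
    fun n => presentable_fac hκ (hF _) hJ₀ hcY _
  choose j q hq using step1
  -- Step 2: a common stage
  obtain ⟨jstar, hjstar⟩ := hJ₀ (Set.range j) (Cardinal.mk_range_le.trans_lt hs)
  have hr : ∀ n : s,
      (q n ≫ D₀.map (homOfLE (hjstar _ ⟨n, rfl⟩))) ≫ cY.ι.app jstar = n.1.t.1.2 := by
    intro n
    rw [Category.assoc, cY.w (homOfLE (hjstar _ ⟨n, rfl⟩))]
    exact hq n
  set r : ∀ n : s, F n.1.t.1.1 ⟶ D₀.obj jstar :=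
    fun n => q n ≫ D₀.map (homOfLE (hjstar _ ⟨n, rfl⟩)) with hr_def
  -- Step 3: the union of all supports
  have hO₀ : Cardinal.mk (⋃ n : s, n.1.S) < κ := by
    refine (Cardinal.mk_iUnion_le _).trans_lt ?_
    exact Cardinal.mul_lt_of_lt hκ.aleph0_le hs
      (Cardinal.iSup_lt_of_isRegular hκ hs fun n => n.1.small)
  set O₀ : Set ((Σ i : ι, (F i ⟶ cY.pt)) × T) := ⋃ n : s, n.1.S with hO₀_def
  have memO₀ : ∀ (n : s) {x}, x ∈ n.1.S → x ∈ O₀ := by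
    intro n x hx
    exact Set.mem_iUnion.mpr ⟨n, hx⟩
  -- Step 4: choose for each element of the union a node containing it
  have step4 : ∀ x : O₀, ∃ n : s, x.1 ∈ n.1.S := fun x => Set.mem_iUnion.mp x.2
  choose σ hσ using step4
  set ef : ∀ x : O₀, F x.1.1.1 ⟶ D₀.obj jstar :=
    fun x => (σ x).1.e x.1 (hσ x) ≫ r (σ x) with hef_def
  have hef : ∀ x : O₀, ef x ≫ cY.ι.app jstar = x.1.1.2 := by
    intro x
    rw [hef_def]
    dsimp only
    rw [Category.assoc, hr (σ x)]
    exact (σ x).1.he x.1 (hσ x)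
  -- Step 5: equalize the compatibility constraints
  have step5 : ∀ c : Σ n : s, n.1.S, ∃ (k : J₀) (hk : jstar ≤ k),
      ef ⟨c.2.1, memO₀ c.1 c.2.2⟩ ≫ D₀.map (homOfLE hk)
        = (c.1.1.e c.2.1 c.2.2 ≫ ef ⟨c.1.1.t, memO₀ c.1 c.1.1.ht⟩) ≫ D₀.map (homOfLE hk) := by
    intro c
    apply presentable_eq hκ (hF _) hJ₀ hcY
    rw [hef ⟨c.2.1, memO₀ c.1 c.2.2⟩, Category.assoc, hef ⟨c.1.1.t, memO₀ c.1 c.1.1.ht⟩]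
    exact (c.1.1.he c.2.1 c.2.2).symm
  choose k hk hconstr using step5
  have hCsmall : Cardinal.mk (Σ n : s, n.1.S) < κ := by
    rw [Cardinal.mk_sigma]
    exact Cardinal.sum_lt_of_isRegular hκ hs fun n => n.1.small
  obtain ⟨jss, hjss⟩ := hJ₀ (insert jstar (Set.range k)) (by
    refine Cardinal.mk_insert_le.trans_lt ?_
    refine Cardinal.add_lt_of_lt hκ.aleph0_le (Cardinal.mk_range_le.trans_lt hCsmall) ?_
    exact lt_of_lt_of_le Cardinal.one_lt_aleph0 hκ.aleph0_le)
  have h1 : jstar ≤ jss := hjss _ (Set.mem_insert _ _)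
  have hconstr' : ∀ c : Σ n : s, n.1.S,
      ef ⟨c.2.1, memO₀ c.1 c.2.2⟩ ≫ D₀.map (homOfLE h1)
        = (c.1.1.e c.2.1 c.2.2 ≫ ef ⟨c.1.1.t, memO₀ c.1 c.1.1.ht⟩) ≫ D₀.map (homOfLE h1) := by
    intro c
    have h2 : k c ≤ jss := hjss _ (Set.mem_insert_of_mem _ ⟨c, rfl⟩)
    have hsplit : (homOfLE h1 : jstar ⟶ jss) = homOfLE (hk c) ≫ homOfLE h2 :=
      Subsingleton.elim _ _
    rw [hsplit, Functor.map_comp, ← Category.assoc, hconstr c, Category.assoc]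
  -- Step 6: factor the colimit injection at the common stage through a generator
  obtain ⟨i', w, h', hw⟩ := hfact (D₀.obj jss) (hpres jss) (cY.ι.app jss)
  -- Step 7: fresh tag and the new node
  obtain ⟨τ, hτ⟩ := exists_fresh_tag O₀ (by rw [hT]; exact hO₀)
  have hg : ∀ x (hx : x ∈ O₀),
      (ef ⟨x, hx⟩ ≫ D₀.map (homOfLE h1) ≫ w) ≫ h' = x.1.2 := by
    intro x hx
    simp only [Category.assoc, hw]
    rw [cY.w (homOfLE h1)]
    exact hef ⟨x, hx⟩
  refine ⟨mkNode hκ.aleph0_le O₀ hO₀ i' h'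
    (fun x hx => ef ⟨x, hx⟩ ≫ D₀.map (homOfLE h1) ≫ w) hg τ hτ, ?_⟩
  intro n hn
  refine ⟨fun x hx => Set.mem_insert_of_mem _ (memO₀ ⟨n, hn⟩ hx), fun x hx => ?_⟩
  rw [mkNode_e hκ.aleph0_le O₀ hO₀ i' h' _ hg τ hτ x (memO₀ ⟨n, hn⟩ hx),
    mkNode_e hκ.aleph0_le O₀ hO₀ i' h' _ hg τ hτ n.t (memO₀ ⟨n, hn⟩ n.ht)]
  have := hconstr' ⟨⟨n, hn⟩, ⟨x, hx⟩⟩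
  rw [← Category.assoc, this]
  simp only [Category.assoc]

end Directed
section Colimit

variable {A : Type u} [Category.{v} A] {κ : Cardinal.{v}} {ι : Type v} {F : ι → A}
  {T : Type v} {J₀ : Type v} [Preorder J₀] {D₀ : J₀ ⥤ A} {cY : Cocone D₀}

/-- Key compatibility: any two factorizations over `Y` of a morphism from a presentable
object get identified by every cocone on the node diagram. -/
theorem accL (hκ : κ.IsRegular) (hJ₀ : IsCardDirected κ J₀)
    (hcY : IsColimit cY) (hpres : ∀ j, IsPresentableObj κ (D₀.obj j))
    (hF : ∀ i, IsPresentableObj κ (F i))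
    (hfact : ∀ X : A, IsPresentableObj κ X → ∀ f : X ⟶ cY.pt,
      ∃ (i : ι) (g : X ⟶ F i) (h : F i ⟶ cY.pt), g ≫ h = f)
    (hT : Cardinal.mk T = κ)
    (c' : Cocone (accDiagram (κ := κ) (F := F) (Y := cY.pt) (T := T)))
    {Q : A} (hQ : IsPresentableObj κ Q) {z₁ z₂ : AccNode κ F cY.pt T}
    (a : Q ⟶ F z₁.t.1.1) (a' : Q ⟶ F z₂.t.1.1)
    (haa : a ≫ z₁.t.1.2 = a' ≫ z₂.t.1.2) :
    a ≫ c'.ι.app z₁ = a' ≫ c'.ι.app z₂ := by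
  have hdir := accNode_directed hκ hJ₀ hcY hpres hF hfact hT
  obtain ⟨z, hz1, hz2⟩ := ((hdir.directed hκ).directed z₁ z₂ : _)
  set u : F z₁.t.1.1 ⟶ F z.t.1.1 := z.e z₁.t (AccNode.mem_of_le hz1 z₁.ht) with hu
  set u' : F z₂.t.1.1 ⟶ F z.t.1.1 := z.e z₂.t (AccNode.mem_of_le hz2 z₂.ht) with hu'
  have huY : (a ≫ u) ≫ z.t.1.2 = (a' ≫ u') ≫ z.t.1.2 := by
    rw [Category.assoc, Category.assoc, z.he z₁.t _, z.he z₂.t _]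
    exact haa
  -- factor the top of z through the presentation of Y
  obtain ⟨j₁, p, hp⟩ := presentable_fac hκ (hF _) hJ₀ hcY z.t.1.2
  have heq0 : ((a ≫ u) ≫ p) ≫ cY.ι.app j₁ = ((a' ≫ u') ≫ p) ≫ cY.ι.app j₁ := by
    rw [Category.assoc (a ≫ u), hp, Category.assoc (a' ≫ u'), hp]
    exact huY
  obtain ⟨j₂, h12, heq⟩ := presentable_eq hκ hQ hJ₀ hcY _ _ heq0
  obtain ⟨i₂, w₂, h₂, hw₂⟩ := hfact (D₀.obj j₂) (hpres j₂) (cY.ι.app j₂)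
  obtain ⟨τ₂, hτ₂⟩ := exists_fresh_tag z.S (by rw [hT]; exact z.small)
  set k : F z.t.1.1 ⟶ F i₂ := p ≫ D₀.map (homOfLE h12) ≫ w₂ with hk
  have hkY : ∀ x (hx : x ∈ z.S), (z.e x hx ≫ k) ≫ h₂ = x.1.2 := by
    intro x hx
    simp only [hk, Category.assoc, hw₂]
    rw [cY.w (homOfLE h12), hp]
    exact z.he x hx
  have hzz' := AccNode.le_extend hκ.aleph0_le z k hkY τ₂ hτ₂
  have hmap : accDiagram.map (homOfLE hzz') = k :=
    AccNode.extend_e_t hκ.aleph0_le z k hkY τ₂ hτ₂ (AccNode.mem_of_le hzz' z.ht)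
  have hmap1 : accDiagram.map (homOfLE hz1) = u := rfl
  have hmap2 : accDiagram.map (homOfLE hz2) = u' := rfl
  calc a ≫ c'.ι.app z₁ = a ≫ u ≫ c'.ι.app z := by
        rw [← c'.w (homOfLE hz1), hmap1]
    _ = ((a ≫ u) ≫ k) ≫ c'.ι.app (mkNode hκ.aleph0_le z.S z.small i₂ h₂ (fun x hx => z.e x hx ≫ k) hkY τ₂ hτ₂) := by
        rw [← c'.w (homOfLE hzz'), hmap]
        simp only [Category.assoc]
    _ = ((a' ≫ u') ≫ k) ≫ c'.ι.app (mkNode hκ.aleph0_le z.S z.small i₂ h₂ (fun x hx => z.e x hx ≫ k) hkY τ₂ hτ₂) := by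
        congr 1
        simp only [hk, ← Category.assoc]
        rw [heq]
    _ = a' ≫ u' ≫ c'.ι.app z := by
        rw [← c'.w (homOfLE hzz'), hmap]
        simp only [Category.assoc]
    _ = a' ≫ c'.ι.app z₂ := by rw [← c'.w (homOfLE hz2), hmap2]

end Colimit
section BigColimit

variable {A : Type u} [Category.{v} A] {κ : Cardinal.{v}} {ι : Type v} {F : ι → A}
  {T : Type v} {J₀ : Type v} [Preorder J₀] {D₀ : J₀ ⥤ A} {cY : Cocone D₀}

theorem acc_isColimit (hκ : κ.IsRegular) (hJ₀ : IsCardDirected κ J₀)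
    (hcY : IsColimit cY) (hpres : ∀ j, IsPresentableObj κ (D₀.obj j))
    (hF : ∀ i, IsPresentableObj κ (F i))
    (hfact : ∀ X : A, IsPresentableObj κ X → ∀ f : X ⟶ cY.pt,
      ∃ (i : ι) (g : X ⟶ F i) (h : F i ⟶ cY.pt), g ≫ h = f)
    (hT : Cardinal.mk T = κ) :
    Nonempty (IsColimit (accCocone (κ := κ) (F := F) (Y := cY.pt) (T := T))) := by
  have hτ0 : Nonempty T := by
    rw [← Cardinal.mk_ne_zero_iff, hT]
    exact hκ.pos.ne'
  obtain ⟨τ0⟩ := hτ0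
  choose iF w h hwh using fun j : J₀ => hfact (D₀.obj j) (hpres j) (cY.ι.app j)
  have hempty : Cardinal.mk ((∅ : Set ((Σ i : ι, (F i ⟶ cY.pt)) × T)) : Set _) < κ := by
    simpa using hκ.pos
  set node : J₀ → AccNode κ F cY.pt T := fun j =>
    mkNode hκ.aleph0_le ∅ hempty (iF j) (h j)
      (fun x hx => absurd hx (Set.notMem_empty x))
      (fun x hx => absurd hx (Set.notMem_empty x))
      τ0 (fun x hx => absurd hx (Set.notMem_empty x)) with hnode
  have hnode_t : ∀ j, (node j).t = ⟨⟨iF j, h j⟩, τ0⟩ := fun j => rfl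
  have hφnat : ∀ (s : Cocone (accDiagram (κ := κ) (F := F) (Y := cY.pt) (T := T)))
      {j j' : J₀} (f : j ⟶ j'),
      D₀.map f ≫ (w j' ≫ s.ι.app (node j')) = w j ≫ s.ι.app (node j) := by
    intro s j j' f
    rw [← Category.assoc]
    refine accL hκ hJ₀ hcY hpres hF hfact hT s (hpres j)
      (z₁ := node j') (z₂ := node j) (D₀.map f ≫ w j') (w j) ?_
    show (D₀.map f ≫ w j') ≫ h j' = w j ≫ h j
    rw [Category.assoc, hwh j', hwh j]
    exact cY.w f
  refine ⟨{
    desc := fun s => hcY.desc ⟨s.pt,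
      { app := fun j => w j ≫ s.ι.app (node j)
        naturality := fun j j' f => by simpa using hφnat s f }⟩
    fac := fun s z => ?_
    uniq := fun s m hm => ?_ }⟩
  · show z.t.1.2 ≫ _ = s.ι.app z
    obtain ⟨j, p, hp⟩ := presentable_fac hκ (hF z.t.1.1) hJ₀ hcY z.t.1.2
    rw [← hp, Category.assoc, hcY.fac]
    show p ≫ w j ≫ s.ι.app (node j) = s.ι.app z
    rw [← Category.assoc]
    have := accL hκ hJ₀ hcY hpres hF hfact hT s (hF z.t.1.1)
      (z₁ := node j) (z₂ := z) (p ≫ w j) (𝟙 _) ?_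
    · rw [this, Category.id_comp]
    · show (p ≫ w j) ≫ h j = 𝟙 _ ≫ z.t.1.2
      rw [Category.assoc, hwh j, hp, Category.id_comp]
  · refine hcY.uniq ⟨s.pt, _⟩ m (fun j => ?_)
    show cY.ι.app j ≫ m = w j ≫ s.ι.app (node j)
    rw [← hwh j, Category.assoc]
    congr 1
    exact hm (node j)

/-- The hard direction: an object all of whose maps from presentables factor through the
generators is a `κ`-directed colimit of generators. -/
theorem exists_dirColimit (hκ : κ.IsRegular) (hJ₀ : IsCardDirected κ J₀)
    (hcY : IsColimit cY) (hpres : ∀ j, IsPresentableObj κ (D₀.obj j))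
    (hF : ∀ i, IsPresentableObj κ (F i))
    (hfact : ∀ X : A, IsPresentableObj κ X → ∀ f : X ⟶ cY.pt,
      ∃ (i : ι) (g : X ⟶ F i) (h : F i ⟶ cY.pt), g ≫ h = f) :
    IsDirColimitOf κ (Set.range F) cY.pt := by
  have hT : Cardinal.mk κ.out = κ := Cardinal.mk_out κ
  exact ⟨AccNode κ F cY.pt κ.out, inferInstance,
    accNode_directed hκ hJ₀ hcY hpres hF hfact hT, accDiagram, accCocone,
    fun z => ⟨z.t.1.1, rfl⟩, acc_isColimit hκ hJ₀ hcY hpres hF hfact hT, ⟨Iso.refl _⟩⟩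

end BigColimit
section FinalAux

variable {A : Type u} [Category.{v} A]

theorem fullSub_eq {P : A → Prop} {X Y : ObjectProperty.FullSubcategory P} (h : X.obj = Y.obj) : X = Y := by
  cases X; cases Y; cases h; rfl

/-- `PUnit` is `κ`-directed. -/
theorem punit_cardDirected (κ : Cardinal.{v}) : IsCardDirected κ (PUnit.{v + 1}) :=
  fun _ _ => ⟨⟨⟩, fun j _ => le_refl j⟩

/-- The constant cocone on `PUnit` is a colimit. -/
noncomputable def punitConstIsColimit (X : A) :
    IsColimit (⟨X, { app := fun _ => 𝟙 X, naturality := by intros; simp }⟩ :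
      Cocone ((Functor.const PUnit.{v + 1}).obj X)) where
  desc s := s.ι.app ⟨⟩
  fac s j := by cases j; simp
  uniq s m hm := by simpa using hm ⟨⟩

end FinalAux

theorem stmt15 {A : Type u} [Category.{v} A] (κ : Cardinal.{v}) (hκ : κ.IsRegular)
    (hA : IsAccessibleCat κ A)
    (ι : Type v) (F : ι → A) (hF : ∀ i, IsPresentableObj κ (F i))
    (B : Set A) (hB : ∀ Y : A, Y ∈ B ↔ IsDirColimitOf κ (Set.range F) Y) :
    (∀ Y : A, Y ∈ B ↔ ∀ X : A, IsPresentableObj κ X → ∀ f : X ⟶ Y,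
      ∃ (i : ι) (g : X ⟶ F i) (h : F i ⟶ Y), g ≫ h = f) ∧
    (∀ (J : Type v) [Preorder J], IsCardDirected κ J → ∀ (D : J ⥤ A) (c : Cocone D),
      IsColimit c → (∀ j : J, D.obj j ∈ B) → c.pt ∈ B) ∧
    IsAccessibleCat κ (ObjectProperty.FullSubcategory (· ∈ B)) := by
  classical
  obtain ⟨hAcolim, ιG, G, hG, hGen⟩ := hA
  -- Part 1
  have part1 : ∀ Y : A, Y ∈ B ↔ ∀ X : A, IsPresentableObj κ X → ∀ f : X ⟶ Y,
      ∃ (i : ι) (g : X ⟶ F i) (h : F i ⟶ Y), g ≫ h = f := by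
    intro Y
    constructor
    · intro hY X hX f
      obtain ⟨J, _, hJ, D, c, hmem, ⟨hc⟩, ⟨iso⟩⟩ := (hB Y).mp hY
      obtain ⟨j, g, hg⟩ := presentable_fac hκ hX hJ hc (f ≫ iso.inv)
      obtain ⟨i, hi⟩ := hmem j
      refine ⟨i, g ≫ eqToHom hi.symm, eqToHom hi ≫ c.ι.app j ≫ iso.hom, ?_⟩
      simp only [Category.assoc, eqToHom_trans_assoc, eqToHom_refl, Category.id_comp]
      rw [← Category.assoc, hg, Category.assoc, iso.inv_hom_id, Category.comp_id]
    · intro hY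
      obtain ⟨Jp, _, hJp, Dp, cp, hmemp, ⟨hcp⟩, ⟨isop⟩⟩ := hGen Y
      set cY : Cocone Dp :=
        ⟨Y, { app := fun j => cp.ι.app j ≫ isop.hom,
              naturality := fun j j' f => by simp [← Category.assoc] }⟩ with hcY_def
      have hcY : IsColimit cY := hcp.ofIsoColimit (Cocones.ext isop (fun j => rfl))
      have hpres : ∀ j, IsPresentableObj κ (Dp.obj j) := by
        intro j
        obtain ⟨g0, hg0⟩ := hmemp j
        rw [← hg0]
        exact hG g0
      refine (hB Y).mpr (exists_dirColimit hκ hJp hcY hpres hF ?_)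
      exact hY
  -- Part 2
  have part2 : ∀ (J : Type v) [Preorder J], IsCardDirected κ J → ∀ (D : J ⥤ A) (c : Cocone D),
      IsColimit c → (∀ j : J, D.obj j ∈ B) → c.pt ∈ B := by
    intro J _ hJ D c hc hmem
    rw [part1]
    intro X hX f
    obtain ⟨j, g, hg⟩ := presentable_fac hκ hX hJ hc f
    obtain ⟨i, g', h', hgh⟩ := (part1 (D.obj j)).mp (hmem j) X hX g
    exact ⟨i, g', h' ≫ c.ι.app j, by rw [← Category.assoc, hgh, hg]⟩
  refine ⟨part1, part2, ?_, ?_⟩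
  -- closedness, used throughout part 3
  · intro J _ hJ
    haveI : HasColimitsOfShape J A := hAcolim J hJ
    haveI hclosed : ObjectProperty.IsClosedUnderColimitsOfShape (· ∈ B) J :=
      ⟨fun X ⟨h⟩ => part2 J hJ h.diag _ h.isColimit h.prop_diag_obj⟩
    exact hasColimitsOfShape_of_closedUnderColimits J (· ∈ B)
  · -- every F i lies in B
    have hFB : ∀ i, F i ∈ B := by
      intro i
      refine (hB (F i)).mpr ⟨PUnit.{v+1}, inferInstance, punit_cardDirected κ,
        (Functor.const _).obj (F i), _, fun _ => ⟨i, rfl⟩, ⟨punitConstIsColimit (F i)⟩,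
        ⟨Iso.refl _⟩⟩
    set F' : ι → ObjectProperty.FullSubcategory (· ∈ B) := fun i => ⟨F i, hFB i⟩ with hF'_def
    have hpreserve : ∀ (J : Type v) [Preorder J], IsCardDirected κ J →
        PreservesColimitsOfShape J (ObjectProperty.ι (· ∈ B)) := by
      intro J _ hJ
      haveI : HasColimitsOfShape J A := hAcolim J hJ
      haveI hclosed : ObjectProperty.IsClosedUnderColimitsOfShape (· ∈ B) J :=
        ⟨fun X ⟨h⟩ => part2 J hJ h.diag _ h.isColimit h.prop_diag_obj⟩
      haveI := createsColimitsOfShapeFullSubcategoryInclusion J (· ∈ B)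
      infer_instance
    refine ⟨ι, F', ?_, ?_⟩
    · -- presentability in the subcategory
      intro i J _ hJ
      haveI := hpreserve J hJ
      haveI : PreservesColimitsOfShape J (coyoneda.obj (Opposite.op (F i))) := hF i J hJ
      haveI : PreservesColimitsOfShape J
          (ObjectProperty.ι (· ∈ B) ⋙ coyoneda.obj (Opposite.op (F i))) :=
        inferInstance
      exact preservesColimitsOfShape_of_natIso
        (F := ObjectProperty.ι (· ∈ B) ⋙ coyoneda.obj (Opposite.op (F i)))
        (G := coyoneda.obj (Opposite.op (F' i)))
        (NatIso.ofComponents (fun Z => Equiv.toIso ⟨fun f => ObjectProperty.homMk f, fun f => f.hom, fun _ => rfl, fun _ => rfl⟩) (by intros; rfl))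
    · -- every object of B is a directed colimit of the F' i
      rintro ⟨Y, hY⟩
      obtain ⟨J, pJ, hJ, D, c, hmem, ⟨hc⟩, ⟨iso⟩⟩ := (hB Y).mp hY
      haveI : HasColimitsOfShape J A := hAcolim J hJ
      haveI hclosed : ObjectProperty.IsClosedUnderColimitsOfShape (· ∈ B) J :=
        ⟨fun X ⟨h⟩ => part2 J hJ h.diag _ h.isColimit h.prop_diag_obj⟩
      haveI := createsColimitsOfShapeFullSubcategoryInclusion J (· ∈ B)
      have hmemB : ∀ j, D.obj j ∈ B := by
        intro j
        obtain ⟨i, hi⟩ := hmem j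
        rw [← hi]
        exact hFB i
      have hptB : c.pt ∈ B := (hB c.pt).mpr ⟨J, pJ, hJ, D, c, hmem, ⟨hc⟩, ⟨Iso.refl _⟩⟩
      set D' : J ⥤ ObjectProperty.FullSubcategory (· ∈ B) := ObjectProperty.lift (· ∈ B) D hmemB with hD'
      set c' : Cocone D' :=
        ⟨⟨c.pt, hptB⟩, { app := fun j => ObjectProperty.homMk (c.ι.app j),
                         naturality := fun j j' f => ObjectProperty.hom_ext _ (c.ι.naturality f) }⟩ with hc'
      have hmap : IsColimit ((ObjectProperty.ι (· ∈ B)).mapCocone c') :=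
        IsColimit.ofIsoColimit hc (Cocones.ext (Iso.refl _) (fun j => by simp; rfl))
      refine ⟨J, pJ, hJ, D', c', ?_, ⟨isColimitOfReflects (ObjectProperty.ι (· ∈ B)) hmap⟩,
        ⟨ObjectProperty.isoMk _ iso⟩⟩
      intro j
      obtain ⟨i, hi⟩ := hmem j
      exact ⟨i, fullSub_eq hi⟩
end
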